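/- The space C_k(L, 2) is not an Ascoli space, where L = M ∪ (ℕ × s) is the topological sum of the countably infinite metric fan M and countably many copies of the convergent sequence s. -/

import Mathlib

open Topology Set

/-- The countably infinite metric fan `M = (ω × ℕ) ∪ {∞}`: `none` is the point `∞`,
`some (α, n)` is the point `(α, n)` of `ω × {n}`. -/
def FanM : Type := Option (ℕ × ℕ)

/-- The fan topology on `M`: points of `ω × ℕ` are isolated and the basic neighborhoods of
`∞` are `U(N) = {(α, n) : n ≥ N} ∪ {∞}`. -/
instance : TopologicalSpace FanM where
  IsOpen S := (none ∈ S) → ∃ N : ℕ, ∀ α n : ℕ, N ≤ n → (Option.some (α, n) : FanM) ∈ S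
  isOpen_univ := fun _ => ⟨0, fun _ _ _ => trivial⟩
  isOpen_inter := by
    intro s t hs ht hmem
    obtain ⟨Ns, hNs⟩ := hs hmem.1
    obtain ⟨Nt, hNt⟩ := ht hmem.2
    exact ⟨max Ns Nt, fun α n hn =>
      ⟨hNs α n (le_trans (le_max_left _ _) hn), hNt α n (le_trans (le_max_right _ _) hn)⟩⟩
  isOpen_sUnion := by
    intro S hS hmem
    obtain ⟨t, htS, hnt⟩ := hmem
    obtain ⟨N, hN⟩ := hS t htS hnt
    exact ⟨N, fun α n hn => ⟨t, htS, hN α n hn⟩⟩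

/-- The convergent sequence `s = {0} ∪ {1/n : n ∈ ℕ, n ≥ 1} ⊆ ℝ`. -/
def sSet : Set ℝ := {x | x = 0 ∨ ∃ n : ℕ, 0 < n ∧ x = 1 / (n : ℝ)}

/-- The space `L = M ⊔ (ℕ × s)`: the topological sum of the metric fan and countably many
copies of the convergent sequence. -/
def Lspace : Type := FanM ⊕ (ℕ × ↥sSet)

instance : TopologicalSpace Lspace := instTopologicalSpaceSum

/-- The point `∞ ∈ M ⊆ L`. -/
def infPt : Lspace := Sum.inl none

/-- The point `a_{p,q} = (p, p+q) ∈ M ⊆ L`. -/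
def aPt (p q : ℕ) : Lspace := Sum.inl (Option.some (p, p + q))

lemma one_div_mem_sSet (m : ℕ) : (1 / (m : ℝ)) ∈ sSet := by
  rcases Nat.eq_zero_or_pos m with h | h
  · exact Or.inl (by simp [h])
  · exact Or.inr ⟨m, h, rfl⟩

/-- The point `b_{p,q} = (p, 1/(p+q)) ∈ ℕ × s ⊆ L`. -/
noncomputable def bPt (p q : ℕ) : Lspace :=
  Sum.inr (p, ⟨1 / ((p + q : ℕ) : ℝ), one_div_mem_sSet _⟩)

/-- The point `c_p = (p, 0) ∈ ℕ × s ⊆ L`. -/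
def cPt (p : ℕ) : Lspace := Sum.inr (p, ⟨0, Or.inl rfl⟩)

/-- The set `A = {f_{p,q} : p, q ∈ ℕ, p, q ≥ 1} ⊆ C(L, 2)`, where `f_{p,q}` is the continuous
function with value `1` exactly at the two points `a_{p,q}` and `b_{p,q}`. -/
def setA : Set C(Lspace, ZMod 2) :=
  {f | ∃ p q : ℕ, 0 < p ∧ 0 < q ∧ ∀ x : Lspace, f x = 1 ↔ (x = aPt p q ∨ x = bPt p q)}

section AuxStatement10

open Filter

lemma fanM_isOpen {S : Set FanM}
    (h : none ∈ S → ∃ N : ℕ, ∀ α n : ℕ, N ≤ n → (Option.some (α, n) : FanM) ∈ S) :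
    IsOpen S := h
lemma fanM_isOpen_elim {S : Set FanM} (hS : IsOpen S) :
    none ∈ S → ∃ N : ℕ, ∀ α n : ℕ, N ≤ n → (Option.some (α, n) : FanM) ∈ S := hS
def xPt (p q : ℕ) : Lspace := Sum.inl (Option.some (q, p))
noncomputable def chi : ZMod 2 → ℝ := fun v => (v.val : ℝ)
lemma chi_zero : chi 0 = 0 := by norm_num [chi]
lemma chi_one : chi 1 = 1 := by simp [chi, ZMod.val_one]
lemma zmod2_cases : ∀ v : ZMod 2, v = 0 ∨ v = 1 := by decide
lemma continuous_chi : Continuous chi := continuous_of_discreteTopology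

lemma tendsto_ite_limit {X : Type*} [TopologicalSpace X] {x : X} {b : ℕ → X}
    (hb : Tendsto b cofinite (𝓝 x)) (P : ℕ → Prop) [DecidablePred P] :
    Tendsto (fun k => if P k then b k else x) cofinite (𝓝 x) := by
  rw [tendsto_nhds] at hb ⊢
  intro S hS hx
  have := hb S hS hx
  rw [mem_cofinite] at this ⊢
  refine this.subset fun k hk => ?_
  simp only [mem_compl_iff, mem_preimage] at hk ⊢
  intro hbk
  by_cases hP : P k
  · rw [if_pos hP] at hk; exact hk hbk
  · rw [if_neg hP] at hk; exact hk hx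

-- fan sequences with escaping depth tend to ∞
lemma tendsto_fan_infPt {g : ℕ → ℕ × ℕ} (h : ∀ k, k ≤ (g k).2) :
    Tendsto (fun k => (Sum.inl (Option.some (g k)) : Lspace)) cofinite (𝓝 infPt) := by
  refine tendsto_nhds.2 ?_
  intro S hS hmem
  obtain ⟨N, hN⟩ := fanM_isOpen_elim (isOpen_sum_iff.1 hS).1 hmem
  rw [mem_cofinite]
  refine (Set.finite_Iio N).subset fun k hk => ?_
  simp only [mem_compl_iff, mem_preimage] at hk
  by_contra hlt
  simp only [Set.mem_Iio, not_lt] at hlt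
  exact hk (hN (g k).1 (g k).2 (le_trans hlt (h k)))

-- the sequence points converge to c_p
lemma tendsto_bPt (p : ℕ) : Tendsto (fun q => bPt p q) cofinite (𝓝 (cPt p)) := by
  rw [tendsto_nhds]
  intro S hS hmem
  have hr := (isOpen_sum_iff.1 hS).2
  obtain ⟨u, v, hu, hv, hpu, h0v, huv⟩ := isOpen_prod_iff.1 hr p ⟨0, Or.inl rfl⟩ hmem
  obtain ⟨w, hw, hwv⟩ := isOpen_induced_iff.1 hv
  have h0w : (0:ℝ) ∈ w := by
    have : (⟨0, Or.inl rfl⟩ : ↥sSet) ∈ Subtype.val ⁻¹' w := hwv.symm ▸ h0v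
    exact this
  obtain ⟨ε, hε, hball⟩ := Metric.isOpen_iff.1 hw 0 h0w
  rw [mem_cofinite]
  refine (Set.finite_Iio (⌈1/ε⌉₊ + 1)).subset fun q hq => ?_
  simp only [mem_compl_iff, mem_preimage] at hq
  by_contra hlt
  simp only [Set.mem_Iio, not_lt] at hlt
  apply hq
  have hqR : (1/ε : ℝ) < (q : ℝ) := by
    refine lt_of_le_of_lt (Nat.le_ceil _) ?_
    exact_mod_cast Nat.lt_of_succ_le hlt
  have hqpos : (0:ℝ) < (q : ℝ) := lt_of_le_of_lt (by positivity) hqR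
  have hpqpos : (0:ℝ) < ((p + q : ℕ) : ℝ) := by
    push_cast; linarith [Nat.cast_nonneg (α := ℝ) p]
  have h2 : (1:ℝ) / ((p + q : ℕ) : ℝ) < ε := by
    have hle : (1:ℝ) / ((p + q : ℕ) : ℝ) ≤ 1 / (q : ℝ) := by
      apply one_div_le_one_div_of_le hqpos
      push_cast; linarith [Nat.cast_nonneg (α := ℝ) p]
    have hlt2 : (1:ℝ) / (q : ℝ) < ε := by
      rw [div_lt_iff₀ hqpos]
      have := mul_lt_mul_of_pos_left hqR hε
      rwa [mul_one_div_cancel (ne_of_gt hε)] at this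
    linarith
  have hmemw : (1 / ((p + q : ℕ) : ℝ)) ∈ w := by
    apply hball
    rw [Metric.mem_ball, Real.dist_eq, sub_zero, abs_of_nonneg (le_of_lt (by positivity))]
    exact h2
  have hmemv : (⟨1 / ((p + q : ℕ) : ℝ), one_div_mem_sSet _⟩ : ↥sSet) ∈ v := by
    rw [← hwv]; exact hmemw
  exact huv ⟨hpu, hmemv⟩


-- uniform version of pointwise eventual agreement, over a compact set of functions
lemma key_unif {Q : Set C(Lspace, ZMod 2)} (hQ : IsCompact Q)
    (x : Lspace) (b : ℕ → Lspace) (hb : Tendsto b cofinite (𝓝 x))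
    (hloc : ∀ g : C(Lspace, ZMod 2), ∃ N, ∀ k, N ≤ k → g (b k) = g x) :
    ∃ N, ∀ f ∈ Q, ∀ k, N ≤ k → f (b k) = f x := by
  classical
  choose Ng hNg using hloc
  set E : C(Lspace, ZMod 2) → Set Lspace :=
    fun g => insert x (Set.range fun k => if Ng g ≤ k then b k else x) with hE
  have hEcomp : ∀ g, IsCompact (E g) := fun g =>
    (tendsto_ite_limit hb _).isCompact_insert_range_of_cofinite
  set W : C(Lspace, ZMod 2) → Set C(Lspace, ZMod 2) :=
    fun g => {f | Set.MapsTo f (E g) {g x}} with hW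
  have hWopen : ∀ g, IsOpen (W g) := fun g =>
    ContinuousMap.isOpen_setOf_mapsTo (hEcomp g) (isOpen_discrete _)
  have hcover : Q ⊆ ⋃ g, W g := by
    intro f hf
    refine Set.mem_iUnion.2 ⟨f, fun y hy => ?_⟩
    rcases hy with rfl | ⟨k, rfl⟩
    · rfl
    · by_cases hk : Ng f ≤ k
      · simp only [if_pos hk]; exact hNg f k hk
      · simp only [if_neg hk]; rfl
  obtain ⟨t, ht⟩ := hQ.elim_finite_subcover W hWopen hcover
  refine ⟨t.sup Ng, fun f hf k hk => ?_⟩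
  obtain ⟨g, hgt, hfg⟩ := by simpa using ht hf
  have h1 : f (b k) = g x := by
    have : b k ∈ E g := by
      refine Set.mem_insert_of_mem _ ⟨k, ?_⟩
      exact if_pos (le_trans (Finset.le_sup hgt) hk)
    exact hfg this
  have h2 : f x = g x := hfg (Set.mem_insert _ _)
  rw [h1, h2]

-- Claim A : uniform over spines and deep levels
lemma claimA {Q : Set C(Lspace, ZMod 2)} (hQ : IsCompact Q) :
    ∃ N, ∀ f ∈ Q, ∀ α n, N ≤ n → f (Sum.inl (Option.some (α, n))) = f infPt := by
  by_contra hcon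
  push_neg at hcon
  choose f hfQ α n hn hne using hcon
  have hkey := key_unif hQ infPt (fun k => Sum.inl (Option.some (α k, n k)))
    (tendsto_fan_infPt (g := fun k => (α k, n k)) hn) ?_
  · obtain ⟨N, hN⟩ := hkey
    exact hne N (hN (f N) (hfQ N) N (le_refl N))
  · intro g
    have hopen : IsOpen {o : FanM | g (Sum.inl o) = g infPt} := by
      have : Continuous fun o : FanM => g (Sum.inl o) :=
        g.continuous.comp continuous_inl
      exact this.isOpen_preimage _ (isOpen_discrete {g infPt})
    obtain ⟨N, hN⟩ := fanM_isOpen_elim hopen rfl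
    exact ⟨N, fun k hk => hN (α k) (n k) (le_trans hk (hn k))⟩

-- Claim B : per copy, uniform in q
lemma claimB {Q : Set C(Lspace, ZMod 2)} (hQ : IsCompact Q) (p : ℕ) :
    ∃ M, ∀ f ∈ Q, ∀ q, M ≤ q → f (bPt p q) = f (cPt p) := by
  refine key_unif hQ (cPt p) (bPt p) (tendsto_bPt p) ?_
  intro g
  have := (g.continuous.tendsto (cPt p)).comp (tendsto_bPt p)
  have hev : ∀ᶠ q in cofinite, g (bPt p q) ∈ ({g (cPt p)} : Set (ZMod 2)) :=
    this (IsOpen.mem_nhds (isOpen_discrete _) rfl)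
  rw [Nat.cofinite_eq_atTop, Filter.eventually_atTop] at hev
  obtain ⟨N, hN⟩ := hev
  exact ⟨N, fun k hk => hN k hk⟩

noncomputable def Phi (pq : ℕ × ℕ) : C(C(Lspace, ZMod 2), ℝ) :=
  ⟨fun f => chi (f (xPt pq.1 pq.2)) * chi (f (bPt pq.1 pq.2)) *
      ((1 - chi (f (cPt pq.1))) * (1 - chi (f infPt))), by
    have h : ∀ y : Lspace, Continuous fun f : C(Lspace, ZMod 2) => chi (f y) :=
      fun y => continuous_chi.comp (continuous_eval_const y)
    exact (((h _).mul (h _)).mul (((continuous_const.sub (h _))).mul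
      ((continuous_const.sub (h _)))))⟩

lemma chi_mul_one_sub_chi (v : ZMod 2) : chi v * (1 - chi v) = 0 := by
  rcases zmod2_cases v with h | h <;> rw [h] <;> simp [chi_zero, chi_one]

lemma tendsto_Phi : Tendsto Phi cofinite (𝓝 0) := by
  rw [ContinuousMap.tendsto_nhds_compactOpen]
  intro Q hQ U hU hmap
  obtain ⟨N, hN⟩ := claimA hQ
  choose M hM using fun p => claimB hQ p
  rw [Filter.eventually_cofinite]
  have hbad : (⋃ p ∈ Set.Iio N, (fun q => (p, q)) '' Set.Iio (M p)).Finite :=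
    (Set.finite_Iio N).biUnion fun p _ => (Set.finite_Iio (M p)).image _
  refine hbad.subset fun pq hpq => ?_
  obtain ⟨p, q⟩ := pq
  simp only [Set.mem_setOf_eq] at hpq
  by_contra hnot
  apply hpq
  intro f hf
  have h0U : (0 : ℝ) ∈ U := hmap hf
  have hval : Phi (p, q) f = 0 := by
    simp only [Set.mem_iUnion, Set.mem_image, Set.mem_Iio] at hnot
    push_neg at hnot
    by_cases hp : N ≤ p
    · have hxe : f (xPt p q) = f infPt := hN f hf q p hp
      show chi (f (xPt p q)) * chi (f (bPt p q)) *
          ((1 - chi (f (cPt p))) * (1 - chi (f infPt))) = 0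
      rw [hxe]
      rcases zmod2_cases (f infPt) with h | h <;> rw [h] <;>
        simp [chi_zero, chi_one]
    · have hq : M p ≤ q := by
        by_contra hq'
        exact absurd rfl (hnot p (by omega) q (by omega))
      have hbe : f (bPt p q) = f (cPt p) := hM p f hf q hq
      show chi (f (xPt p q)) * chi (f (bPt p q)) *
          ((1 - chi (f (cPt p))) * (1 - chi (f infPt))) = 0
      rw [hbe]
      rcases zmod2_cases (f (cPt p)) with h | h <;> rw [h] <;>
        simp [chi_zero, chi_one]
  rw [hval]
  exact h0U

-- isolation of 1/m in sSet
lemma sSet_isolated (m : ℕ) (hm : 0 < m) :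
    IsOpen {x : ↥sSet | (x : ℝ) = 1 / (m : ℝ)} := by
  classical
  set b : ℝ := if 1 < m then 1 / ((m - 1 : ℕ) : ℝ) else 2 with hb
  have hmR : (0:ℝ) < (m:ℝ) := by exact_mod_cast hm
  have key : {x : ↥sSet | (x : ℝ) = 1 / (m : ℝ)} =
      Subtype.val ⁻¹' Set.Ioo (1 / ((m + 1 : ℕ) : ℝ)) b := by
    ext x
    simp only [Set.mem_setOf_eq, Set.mem_preimage, Set.mem_Ioo]
    constructor
    · intro hx
      rw [hx]
      constructor
      · apply one_div_lt_one_div_of_lt hmR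
        push_cast; linarith
      · rw [hb]
        split_ifs with h1
        · apply one_div_lt_one_div_of_lt
          · have : (1:ℕ) ≤ m - 1 := by omega
            exact_mod_cast Nat.lt_of_lt_of_le Nat.zero_lt_one this
          · have : (m - 1 : ℕ) < m := by omega
            exact_mod_cast this
        · have hm1 : m = 1 := by omega
          rw [hm1]; norm_num
    · rintro ⟨hlo, hhi⟩
      rcases x.2 with h0 | ⟨k, hk, hkx⟩
      · exfalso
        rw [h0] at hlo
        have : (0:ℝ) < 1 / ((m+1:ℕ):ℝ) := by positivity
        linarith
      · rw [hkx] at hlo hhi ⊢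
        have hkR : (0:ℝ) < (k:ℝ) := by exact_mod_cast hk
        have hkm1 : k < m + 1 := by
          by_contra hcon
          push_neg at hcon
          have : (1:ℝ)/(k:ℝ) ≤ 1/((m+1:ℕ):ℝ) := by
            apply one_div_le_one_div_of_le (by positivity)
            exact_mod_cast hcon
          linarith
        have hkm : m ≤ k := by
          by_contra hcon
          push_neg at hcon
          have h1m : 1 < m := by omega
          rw [hb, if_pos h1m] at hhi
          have hk1 : k ≤ m - 1 := by omega
          have : (1:ℝ)/((m-1:ℕ):ℝ) ≤ 1/(k:ℝ) := by
            apply one_div_le_one_div_of_le hkR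
            exact_mod_cast hk1
          linarith
        have : k = m := by omega
        rw [this]
  rw [key]
  exact isOpen_Ioo.preimage continuous_subtype_val

open Classical in
noncomputable def Ffun (p q : ℕ) : Lspace → ZMod 2 := fun x =>
  if x = xPt p q ∨ x = bPt p q then 1 else 0

lemma inl_none_ne_xPt (p q : ℕ) : (Sum.inl none : Lspace) ≠ xPt p q := by
  intro h
  exact Option.some_ne_none _ (Sum.inl.inj (α := Option (ℕ × ℕ)) (β := ℕ × ↥sSet) h).symm
lemma inl_none_ne_bPt (p q : ℕ) : (Sum.inl none : Lspace) ≠ bPt p q := by simp [bPt]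
lemma inr_ne_xPt (p q : ℕ) (w : ℕ × ↥sSet) : (Sum.inr w : Lspace) ≠ xPt p q := by simp [xPt]
lemma inl_deep_ne_xPt (p q α n : ℕ) (h : p + 1 ≤ n) :
    (Sum.inl (Option.some (α, n)) : Lspace) ≠ xPt p q := by
  simp only [xPt, ne_eq, Sum.inl.injEq, Option.some.injEq, Prod.mk.injEq]
  rintro ⟨-, rfl⟩
  omega
lemma inl_ne_bPt (p q : ℕ) (o : FanM) : (Sum.inl o : Lspace) ≠ bPt p q := by simp [bPt]

lemma Ffun_eq_zero {p q : ℕ} {x : Lspace} (h1 : x ≠ xPt p q) (h2 : x ≠ bPt p q) :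
    Ffun p q x = 0 := by
  simp only [Ffun]
  rw [if_neg]
  rintro (h | h)
  exacts [h1 h, h2 h]

lemma Ffun_xPt (p q : ℕ) : Ffun p q (xPt p q) = 1 := if_pos (Or.inl rfl)
lemma Ffun_bPt (p q : ℕ) : Ffun p q (bPt p q) = 1 := if_pos (Or.inr rfl)

lemma continuous_Ffun (p q : ℕ) (h : 0 < p + q) : Continuous (Ffun p q) := by
  classical
  apply continuous_sum_dom.2
  constructor
  · -- on the fan
    rw [continuous_def]
    intro S _
    apply fanM_isOpen
    intro hmem
    refine ⟨p + 1, fun α n hn => ?_⟩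
    have h1 : Ffun p q (Sum.inl none) = 0 :=
      Ffun_eq_zero (inl_none_ne_xPt p q) (inl_none_ne_bPt p q)
    have h2 : Ffun p q (Sum.inl (Option.some (α, n))) = 0 :=
      Ffun_eq_zero (inl_deep_ne_xPt p q α n hn) (inl_ne_bPt p q _)
    change Ffun p q (Sum.inl none) ∈ S at hmem
    show Ffun p q (Sum.inl (Option.some (α, n))) ∈ S
    rw [h2]
    rw [h1] at hmem
    exact hmem
  · -- on the sequences
    rw [continuous_iff_continuousAt]
    intro z
    by_cases hz : Sum.inr z = bPt p q
    · -- the special isolated point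
      have hopen : IsOpen {z} := by
        have : ({z} : Set (ℕ × ↥sSet)) =
            {p} ×ˢ {x : ↥sSet | (x : ℝ) = 1 / ((p + q : ℕ) : ℝ)} := by
          ext w
          simp only [Set.mem_singleton_iff, Set.mem_prod, Set.mem_setOf_eq]
          have hz' : z = (p, ⟨1 / ((p + q : ℕ) : ℝ), one_div_mem_sSet _⟩) := by
            have := hz
            simp only [bPt, Sum.inr.injEq] at this
            exact this
          constructor
          · rintro rfl
            rw [hz']
            exact ⟨rfl, rfl⟩
          · rintro ⟨h1, h2⟩
            rw [hz']
            obtain ⟨w1, w2⟩ := w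
            simp only [Set.mem_singleton_iff] at h1
            simp only at h2
            subst h1
            exact Prod.ext rfl (Subtype.ext h2)
        rw [this]
        exact (isOpen_discrete _).prod (sSet_isolated _ h)
      have hev : (fun w : ℕ × ↥sSet => Ffun p q (Sum.inr w)) =ᶠ[nhds z]
          fun _ => Ffun p q (Sum.inr z) := by
        filter_upwards [hopen.mem_nhds rfl] with w hw
        rw [Set.mem_singleton_iff] at hw
        rw [hw]
      exact hev.continuousAt
    · -- any other point : locally constant 0
      have hval : Ffun p q (Sum.inr z) = 0 :=
        Ffun_eq_zero (inr_ne_xPt p q z) hz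
      have hopen : IsOpen {w : ℕ × ↥sSet | Sum.inr w ≠ bPt p q} := by
        have : {w : ℕ × ↥sSet | Sum.inr w ≠ bPt p q} =
            ({(p, ⟨1 / ((p + q : ℕ) : ℝ), one_div_mem_sSet _⟩)} : Set (ℕ × ↥sSet))ᶜ := by
          ext w
          simp [bPt, Sum.inr.injEq]
        rw [this]
        exact isClosed_singleton.isOpen_compl
      have hev : (fun w : ℕ × ↥sSet => Ffun p q (Sum.inr w)) =ᶠ[nhds z]
          fun _ => Ffun p q (Sum.inr z) := by
        filter_upwards [hopen.mem_nhds hz] with w hw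
        rw [hval]
        exact Ffun_eq_zero (inr_ne_xPt p q w) hw
      exact hev.continuousAt

noncomputable def Fmap (p q : ℕ) : C(Lspace, ZMod 2) :=
  if h : 0 < p + q then ⟨Ffun p q, continuous_Ffun p q h⟩ else
    ⟨fun _ => 0, continuous_const⟩

noncomputable def curryF : Filter (ℕ × ℕ) := Filter.curry atTop atTop

lemma curryF_le_cofinite : curryF ≤ (cofinite : Filter (ℕ × ℕ)) := by
  intro s hs
  rw [Filter.mem_cofinite] at hs
  have : ∀ᶠ x in curryF, x ∈ s := by
    rw [curryF, Filter.eventually_curry_iff]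
    refine Filter.Eventually.of_forall fun p => ?_
    have hfin : {q | (p, q) ∉ s}.Finite := by
      refine Set.Finite.preimage (Function.Injective.injOn (Prod.mk_right_injective p)) hs
    rw [← Nat.cofinite_eq_atTop]
    rw [Filter.eventually_cofinite]
    simpa using hfin
  exact this

instance curryF_neBot : curryF.NeBot := by
  constructor
  intro hbot
  have : ∀ᶠ x in curryF, False := by rw [hbot]; exact Filter.eventually_bot
  rw [curryF, Filter.eventually_curry_iff] at this
  obtain ⟨p, hp⟩ := this.exists
  exact hp.exists.choose_spec

-- compact subsets of L meet only finitely many sequence copies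
lemma copies_finite {Q : Set Lspace} (hQ : IsCompact Q) :
    {p : ℕ | ∃ t, Sum.inr (p, t) ∈ Q}.Finite := by
  have hpre : IsCompact (Sum.inr ⁻¹' Q : Set (ℕ × ↥sSet)) := by
    have hce : IsClosedEmbedding (Sum.inr : ℕ × ↥sSet → Lspace) := .inr
    exact hce.isCompact_preimage hQ
  have himg : IsCompact (Prod.fst '' (Sum.inr ⁻¹' Q) : Set ℕ) :=
    hpre.image continuous_fst
  have hfin : (Prod.fst '' (Sum.inr ⁻¹' Q) : Set ℕ).Finite :=
    himg.finite ⟨by infer_instance⟩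
  refine hfin.subset fun p ⟨t, ht⟩ => ⟨(p, t), ht, rfl⟩

-- each fixed-depth row of the fan meets a compact set in finitely many spines
lemma row_finite {Q : Set Lspace} (hQ : IsCompact Q) (d : ℕ) :
    {α : ℕ | Sum.inl (Option.some (α, d)) ∈ Q}.Finite := by
  classical
  set R : Set Lspace := {y | ∃ α : ℕ, y = Sum.inl (Option.some (α, d))} with hR
  have hRclosed : IsClosed R := by
    rw [← isOpen_compl_iff]
    apply isOpen_sum_iff.2
    constructor
    · apply fanM_isOpen
      intro _
      refine ⟨d + 1, fun α n hn => ?_⟩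
      show (Sum.inl (Option.some (α, n)) : Lspace) ∉ R
      rintro ⟨β, hβ⟩
      have h1 := Option.some.inj (Sum.inl.inj hβ)
      have h2 : n = d := congrArg Prod.snd h1
      omega
    · have huniv : (Sum.inr ⁻¹' Rᶜ : Set (ℕ × ↥sSet)) = Set.univ := by
        ext w
        refine ⟨fun _ => trivial, fun _ => ?_⟩
        show (Sum.inr w : Lspace) ∉ R
        rintro ⟨β, hβ⟩
        exact (Sum.inr_ne_inl : (Sum.inr _ : FanM ⊕ (ℕ × ↥sSet)) ≠ Sum.inl _) hβ
      show IsOpen (Sum.inr ⁻¹' Rᶜ : Set (ℕ × ↥sSet))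
      rw [huniv]
      exact isOpen_univ
  have hQR : IsCompact (Q ∩ R) := hQ.inter_right hRclosed
  have hdisc : DiscreteTopology ↥(Q ∩ R) := by
    rw [discreteTopology_iff_isOpen_singleton]
    intro a
    have hopen : IsOpen ({a.val} : Set Lspace) := by
      obtain ⟨α, hα⟩ := a.2.2
      rw [hα]
      apply isOpen_sum_iff.2
      constructor
      · apply fanM_isOpen
        intro hcon
        have : (Sum.inl none : Lspace) = Sum.inl (Option.some (α, d)) := hcon
        exact (Option.some_ne_none _ (Sum.inl.inj (α := Option (ℕ × ℕ)) (β := ℕ × ↥sSet) this).symm).elim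
      · have hempty : (Sum.inr ⁻¹' {(Sum.inl (Option.some (α, d)) : Lspace)} :
            Set (ℕ × ↥sSet)) = ∅ := by
          ext w
          simp only [Set.mem_preimage, Set.mem_singleton_iff, Set.mem_empty_iff_false,
            iff_false]
          intro hcon
          exact (Sum.inr_ne_inl : (Sum.inr _ : FanM ⊕ (ℕ × ↥sSet)) ≠ Sum.inl _) hcon
        show IsOpen (Sum.inr ⁻¹' {(Sum.inl (Option.some (α, d)) : Lspace)} : Set (ℕ × ↥sSet))
        rw [hempty]
        exact isOpen_empty
    have hset : ({a} : Set ↥(Q ∩ R)) = Subtype.val ⁻¹' {a.val} := by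
      ext y
      simp [Subtype.ext_iff]
    rw [hset]
    exact hopen.preimage continuous_subtype_val
  have hfin : (Q ∩ R).Finite := hQR.finite ⟨hdisc⟩
  have hinj : Function.Injective fun α : ℕ => (Sum.inl (Option.some (α, d)) : Lspace) := by
    intro a b hab
    have h1 := Option.some.inj (Sum.inl.inj hab)
    exact congrArg Prod.fst h1
  refine (hfin.preimage (Function.Injective.injOn hinj)).subset fun α hα => ?_
  exact ⟨hα, α, rfl⟩

lemma tendsto_F : Filter.Tendsto (fun pq : ℕ × ℕ => Fmap pq.1 pq.2) curryF
    (𝓝 (0 : C(Lspace, ZMod 2))) := by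
  rw [ContinuousMap.tendsto_nhds_compactOpen]
  intro Q hQ U hU hmap
  rcases Q.eq_empty_or_nonempty with rfl | ⟨y0, hy0⟩
  · exact Filter.Eventually.of_forall fun _ => Set.mapsTo_empty _ _
  have h0U : (0 : ZMod 2) ∈ U := hmap hy0
  rw [curryF, Filter.eventually_curry_iff]
  have hcop := (copies_finite hQ).bddAbove
  obtain ⟨P, hP⟩ := hcop
  have hp_ev : ∀ᶠ p in Filter.atTop (α := ℕ), P + 1 ≤ p :=
    Filter.eventually_atTop.2 ⟨P + 1, fun _ h => h⟩
  filter_upwards [hp_ev, Filter.eventually_atTop.2 ⟨1, fun (p : ℕ) h => h⟩]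
    with p hpP hp1
  have hrow := (row_finite hQ p).bddAbove
  obtain ⟨A, hA⟩ := hrow
  have hq_ev : ∀ᶠ q in Filter.atTop (α := ℕ), A + 1 ≤ q :=
    Filter.eventually_atTop.2 ⟨A + 1, fun _ h => h⟩
  filter_upwards [hq_ev] with q hqA
  -- show MapsTo (Fmap p q) Q U
  intro y hy
  have hpq : 0 < p + q := by omega
  have hFm : Fmap p q = ⟨Ffun p q, continuous_Ffun p q hpq⟩ := dif_pos hpq
  rw [hFm]
  have hyx : y ≠ xPt p q := by
    rintro rfl
    have : q ∈ {α : ℕ | Sum.inl (Option.some (α, p)) ∈ Q} := hy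
    have := hA this
    omega
  have hyb : y ≠ bPt p q := by
    rintro rfl
    have : p ∈ {r : ℕ | ∃ t, Sum.inr (r, t) ∈ Q} := ⟨_, hy⟩
    have := hP this
    omega
  show Ffun p q y ∈ U
  rw [Ffun_eq_zero hyx hyb]
  exact h0U

lemma cPt_ne_xPt (p q : ℕ) : cPt p ≠ xPt p q :=
  fun h => (Sum.inr_ne_inl : (Sum.inr _ : FanM ⊕ (ℕ × ↥sSet)) ≠ Sum.inl _) h
lemma infPt_ne_xPt (p q : ℕ) : infPt ≠ xPt p q := by
  intro hcon
  exact Option.some_ne_none _ (Sum.inl.inj (α := Option (ℕ × ℕ)) (β := ℕ × ↥sSet) hcon).symm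
lemma infPt_ne_bPt (p q : ℕ) : infPt ≠ bPt p q :=
  fun h => (Sum.inl_ne_inr : (Sum.inl _ : FanM ⊕ (ℕ × ↥sSet)) ≠ Sum.inr _) h
lemma cPt_ne_bPt (p q : ℕ) (h : 0 < p + q) : cPt p ≠ bPt p q := by
  intro hcon
  have h1 := Sum.inr.inj hcon
  have h2 := congrArg Prod.snd h1
  have h3 := congrArg Subtype.val h2
  simp only [cPt, bPt] at h3
  have hpos : (0:ℝ) < 1 / ((p + q : ℕ) : ℝ) := by
    have : (0:ℝ) < ((p + q : ℕ) : ℝ) := by exact_mod_cast h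
    positivity
  rw [← h3] at hpos
  exact lt_irrefl _ hpos

lemma Phi_F_eq_one (p q : ℕ) (hp : 1 ≤ p) : Phi (p, q) (Fmap p q) = 1 := by
  have hpq : 0 < p + q := by omega
  have hFm : Fmap p q = ⟨Ffun p q, continuous_Ffun p q hpq⟩ := dif_pos hpq
  show chi (Fmap p q (xPt p q)) * chi (Fmap p q (bPt p q)) *
      ((1 - chi (Fmap p q (cPt p))) * (1 - chi (Fmap p q infPt))) = 1
  rw [hFm]
  show chi (Ffun p q (xPt p q)) * chi (Ffun p q (bPt p q)) *
      ((1 - chi (Ffun p q (cPt p))) * (1 - chi (Ffun p q infPt))) = 1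
  rw [Ffun_xPt, Ffun_bPt, Ffun_eq_zero (cPt_ne_xPt p q) (cPt_ne_bPt p q hpq),
    Ffun_eq_zero (infPt_ne_xPt p q) (infPt_ne_bPt p q), chi_zero, chi_one]
  ring


end AuxStatement10

/-- The space `C_k(L, 2)` is not an Ascoli space: there is a compact subset
`K` of `C_k(C_k(L, 2), ℝ)` that is not evenly continuous, i.e. for which the evaluation map
`C_k(L,2) × K → ℝ` is not (jointly) continuous. -/
theorem statement10 :
    ∃ K : Set C(C(Lspace, ZMod 2), ℝ), IsCompact K ∧
      ¬ Continuous fun p : C(Lspace, ZMod 2) × K => (p.2 : C(C(Lspace, ZMod 2), ℝ)) p.1 := by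
  classical
  refine ⟨insert 0 (Set.range Phi), tendsto_Phi.isCompact_insert_range_of_cofinite, ?_⟩
  intro hcont
  set K : Set C(C(Lspace, ZMod 2), ℝ) := insert 0 (Set.range Phi) with hK
  have h0K : (0 : C(C(Lspace, ZMod 2), ℝ)) ∈ K := Set.mem_insert _ _
  have hPhiK : ∀ pq, Phi pq ∈ K := fun pq => Set.mem_insert_of_mem _ ⟨pq, rfl⟩
  have hF : Filter.Tendsto (fun pq : ℕ × ℕ => Fmap pq.1 pq.2) curryF
      (𝓝 (0 : C(Lspace, ZMod 2))) := tendsto_F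
  have hP : Filter.Tendsto (fun pq : ℕ × ℕ => (⟨Phi pq, hPhiK pq⟩ : K)) curryF
      (𝓝 (⟨0, h0K⟩ : K)) := by
    rw [IsEmbedding.subtypeVal.tendsto_nhds_iff]
    exact tendsto_Phi.mono_left curryF_le_cofinite
  have hEv : Filter.Tendsto (fun pq : ℕ × ℕ => Phi pq (Fmap pq.1 pq.2)) curryF
      (𝓝 (0 : ℝ)) := by
    have h1 := (hcont.tendsto ((0 : C(Lspace, ZMod 2)), (⟨0, h0K⟩ : K))).comp
      (hF.prodMk_nhds hP)
    exact h1
  have hOne : ∀ᶠ pq : ℕ × ℕ in curryF, Phi pq (Fmap pq.1 pq.2) = 1 := by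
    rw [curryF, Filter.eventually_curry_iff]
    filter_upwards [Filter.eventually_atTop.2 ⟨1, fun (p : ℕ) h => h⟩] with p hp
    exact Filter.Eventually.of_forall fun q => Phi_F_eq_one p q hp
  have hTone : Filter.Tendsto (fun _ : ℕ × ℕ => (1 : ℝ)) curryF (𝓝 (0 : ℝ)) :=
    Filter.Tendsto.congr' (by filter_upwards [hOne] with pq h using h) hEv
  have : (1 : ℝ) = 0 := tendsto_nhds_unique tendsto_const_nhds hTone
  norm_num at this
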